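/- Let X be a simplicial complex on n vertices, k \geq 0, and \sigma \in X(k). Then \sum_{v \in \sigma} deg_{G_X}(v) \leq kn + deg_X(\sigma) + \sum_{j=0}^{k+1} |\sigma[j]|. -/

import Mathlib

open Finset Matrix BigOperators

noncomputable section

/-- An abstract simplicial complex on the vertex set `Fin n`
(faces are finite sets of vertices, closed under taking subsets,
containing the empty face). -/
structure SC (n : ℕ) where
  faces : Finset (Finset (Fin n))
  empty_mem : ∅ ∈ faces
  down_closed : ∀ ⦃σ⦄, σ ∈ faces → ∀ ⦃τ : Finset (Fin n)⦄, τ ⊆ σ → τ ∈ faces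

namespace SC

variable {n : ℕ}

/-- the faces with exactly `k` vertices, i.e. the faces of dimension `k-1`;
so `X.face (k+1)` plays the role of `X(k)` in the paper. -/
abbrev face (X : SC n) (k : ℕ) : Type := {σ : Finset (Fin n) // σ ∈ X.faces ∧ σ.card = k}

/-- the incidence sign `(τ:σ) = (-1)^{#{v ∈ τ : v < u}}`, `u` the unique vertex of `τ \ σ`
(meaningful when `σ ⊂ τ` with `|τ \ σ| = 1`). -/
def iSgn (σ τ : Finset (Fin n)) : ℝ :=
  ∑ u ∈ τ \ σ, (-1 : ℝ) ^ (τ.filter (fun v => v < u)).card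

/-- the boundary matrix from `(k+1)`-element faces to `k`-element faces
(i.e. `∂_k` of the paper, in the paper's dimension indexing). -/
def bdry (X : SC n) (k : ℕ) : Matrix (X.face k) (X.face (k+1)) ℝ :=
  Matrix.of fun σ τ => if σ.1 ⊆ τ.1 then iSgn σ.1 τ.1 else 0

/-- the `k`-dimensional combinatorial Laplacian `L_k(X)`,
indexed by faces with `k+1` vertices. -/
def lap (X : SC n) (k : ℕ) : Matrix (X.face (k+1)) (X.face (k+1)) ℝ :=
  X.bdry (k+1) * (X.bdry (k+1))ᴴ + (X.bdry k)ᴴ * X.bdry k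

/-- degree of the vertex `u` in the 1-skeleton graph `G_X`. -/
def gdeg (X : SC n) (u : Fin n) : ℕ :=
  (Finset.univ.filter (fun v => v ≠ u ∧ insert u {v} ∈ X.faces)).card

/-- the graph Laplacian `L(G_X)` of the 1-skeleton `G_X`. -/
def glap (X : SC n) : Matrix (Fin n) (Fin n) ℝ :=
  Matrix.of fun u v =>
    if u = v then (X.gdeg u : ℝ) else if insert u {v} ∈ X.faces then -1 else 0

/-- degree of a face: the number of faces of `X` with one more vertex containing it. -/
def fdeg (X : SC n) (σ : Finset (Fin n)) : ℕ :=
  (X.faces.filter (fun τ => τ.card = σ.card + 1 ∧ σ ⊆ τ)).card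

/-- the vertex `u` belongs to the link of `σ` in `X`. -/
def vLk (X : SC n) (u : Fin n) (σ : Finset (Fin n)) : Prop :=
  u ∉ σ ∧ insert u σ ∈ X.faces

instance (X : SC n) (u : Fin n) (σ : Finset (Fin n)) : Decidable (X.vLk u σ) := by
  unfold vLk; infer_instance

/-- the set `σ[j]`: vertices `u ∉ lk_X(σ)` with `u ∈ lk_X(v)` for all `v ∈ σ` and
`|{w ∈ σ : u ∈ lk_X(σ \ {w})}| = j`. -/
def dset (X : SC n) (σ : Finset (Fin n)) (j : ℕ) : Finset (Fin n) :=
  Finset.univ.filter (fun u => ¬ X.vLk u σ ∧ (∀ v ∈ σ, X.vLk u {v}) ∧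
    (σ.filter (fun w => X.vLk u (σ.erase w))).card = j)

/-- `X.nonface k` is the set of `k`-element vertex subsets that are not faces;
so `X.nonface (k+1)` is `\overline{X(k)}` of the paper. -/
def nonface (X : SC n) (k : ℕ) : Finset (Finset (Fin n)) :=
  (Finset.powersetCard k (Finset.univ : Finset (Fin n))).filter (fun σ => σ ∉ X.faces)

end SC

/-- the all-ones matrix `J`. -/
def Jmat (n : ℕ) : Matrix (Fin n) (Fin n) ℝ := Matrix.of fun _ _ => 1

open scoped Classical in
/-- the eigenvalues of a real symmetric matrix, sorted increasingly (junk `[]` otherwise). -/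
def eigList {m : Type*} [Fintype m] [DecidableEq m] (A : Matrix m m ℝ) : List ℝ :=
  if h : A.IsHermitian then (Finset.univ.val.map h.eigenvalues).sort (· ≤ ·) else []

/-- `λ_i(A)`: the `i`-th smallest eigenvalue (1-based). -/
def ithEig {m : Type*} [Fintype m] [DecidableEq m] (A : Matrix m m ℝ) (i : ℕ) : ℝ :=
  (eigList A).getD (i - 1) 0

/-- `S_{k,i}(A)`: the `i`-th smallest (1-based) element of the multiset of sums of `k`
eigenvalues `∑_{j ∈ A} λ_j(A)` over all `k`-element index subsets. -/
def Ssum {n : ℕ} (A : Matrix (Fin n) (Fin n) ℝ) (k i : ℕ) : ℝ :=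
  ((((Finset.univ : Finset (Fin n)).powersetCard k).val.map
      (fun S : Finset (Fin n) => ∑ j ∈ S, (eigList A).getD (j : ℕ) 0)).sort (· ≤ ·)).getD (i - 1) 0

/-- `max_{σ ∈ X(k)} ∑_{j=0}^{k+1} (j+1)|σ[j]|`. -/
def maxD {n : ℕ} (X : SC n) (k : ℕ) : ℕ :=
  Finset.univ.sup fun σ : X.face (k+1) =>
    ∑ j ∈ Finset.range (k+2), (j+1) * (X.dset σ.1 j).card

/-- the matrix `P` of the decomposition `L_k(X) = Q - P`. -/
def Pmat {n : ℕ} (X : SC n) (k : ℕ) : Matrix (X.face (k+1)) (X.face (k+1)) ℝ :=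
  Matrix.of fun σ τ =>
    if σ = τ then (∑ v ∈ σ.1, (X.gdeg v : ℝ)) - (X.fdeg σ.1 : ℝ)
    else if (σ.1 ∩ τ.1).card = k ∧ σ.1 ∪ τ.1 ∉ X.faces ∧ (σ.1 \ τ.1) ∪ (τ.1 \ σ.1) ∈ X.faces then
      -(SC.iSgn (σ.1 ∩ τ.1) σ.1 * SC.iSgn (σ.1 ∩ τ.1) τ.1)
    else 0

/-- the matrix `Q` of the decomposition `L_k(X) = Q - P`. -/
def Qmat {n : ℕ} (X : SC n) (k : ℕ) : Matrix (X.face (k+1)) (X.face (k+1)) ℝ :=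
  Matrix.of fun σ τ =>
    if σ = τ then (∑ v ∈ σ.1, (X.gdeg v : ℝ)) + (k : ℝ) + 1
    else if (σ.1 ∩ τ.1).card = k ∧ σ.1 ∪ τ.1 ∉ X.faces ∧ (σ.1 \ τ.1) ∪ (τ.1 \ σ.1) ∉ X.faces then
      SC.iSgn (σ.1 ∩ τ.1) σ.1 * SC.iSgn (σ.1 ∩ τ.1) τ.1
    else 0

/-- incidence sign with values in an arbitrary field. -/
def iSgnF {F : Type*} [Field F] {n : ℕ} (σ τ : Finset (Fin n)) : F :=
  ∑ u ∈ τ \ σ, (-1 : F) ^ (τ.filter (fun v => v < u)).card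

/-- the `k`-th additive compound matrix `M^{[k]}`, indexed by `k`-element subsets of `Fin n`. -/
def addCompound {F : Type*} [Field F] {n : ℕ} (M : Matrix (Fin n) (Fin n) F) (k : ℕ) :
    Matrix {S : Finset (Fin n) // S.card = k} {S : Finset (Fin n) // S.card = k} F :=
  Matrix.of fun σ τ =>
    if σ = τ then ∑ i ∈ σ.1, M i i
    else if (σ.1 ∩ τ.1).card = k - 1 then
      (iSgnF (σ.1 ∩ τ.1) σ.1 * iSgnF (σ.1 ∩ τ.1) τ.1) *
        ∑ i ∈ σ.1 \ τ.1, ∑ j ∈ τ.1 \ σ.1, M i j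
    else 0

end
/-- For `σ ∈ X(k)`:
`∑_{v ∈ σ} deg_{G_X}(v) ≤ kn + deg_X(σ) + ∑_{j=0}^{k+1} |σ[j]|`. -/
theorem stmt3 (n k : ℕ) (X : SC n) (hfull : ∀ v : Fin n, {v} ∈ X.faces)
    (σ : Finset (Fin n)) (hσ : σ ∈ X.faces) (hc : σ.card = k + 1) :
    ∑ v ∈ σ, X.gdeg v ≤ k * n + X.fdeg σ + ∑ j ∈ Finset.range (k + 2), (X.dset σ j).card := by
  classical
  set c : Fin n → ℕ := fun u => (σ.filter (fun v => u ≠ v ∧ insert v {u} ∈ X.faces)).card with hcdef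
  have hswap : ∑ v ∈ σ, X.gdeg v = ∑ u : Fin n, c u := by
    simp only [SC.gdeg, Finset.card_filter, hcdef]
    rw [Finset.sum_comm]
  have hcle : ∀ u, c u ≤ k + 1 := by
    intro u
    calc c u ≤ σ.card := Finset.card_le_card (Finset.filter_subset _ _)
    _ = k + 1 := hc
  set A : Finset (Fin n) := Finset.univ.filter (fun u => c u = k + 1) with hAdef
  have h1 : ∑ u : Fin n, c u ≤ k * n + A.card := by
    have : ∑ u : Fin n, c u ≤ ∑ u : Fin n, (k + if c u = k + 1 then 1 else 0) := by
      apply Finset.sum_le_sum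
      intro u _
      have := hcle u
      split <;> omega
    calc ∑ u : Fin n, c u ≤ ∑ u : Fin n, (k + if c u = k + 1 then 1 else 0) := this
    _ = k * n + A.card := by
        rw [Finset.sum_add_distrib, Finset.sum_const, Finset.card_univ, Fintype.card_fin,
          smul_eq_mul, hAdef, Finset.card_filter, Nat.mul_comm]
  -- characterize membership in A
  have hAmem : ∀ u ∈ A, u ∉ σ ∧ ∀ v ∈ σ, X.vLk u {v} := by
    intro u hu
    rw [hAdef, Finset.mem_filter] at hu
    have hfe : σ.filter (fun v => u ≠ v ∧ insert v {u} ∈ X.faces) = σ := by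
      apply Finset.eq_of_subset_of_card_le (Finset.filter_subset _ _)
      exact le_of_eq (hc.trans hu.2.symm)
    have hall : ∀ v ∈ σ, u ≠ v ∧ insert v {u} ∈ X.faces := by
      intro v hv
      have hv' : v ∈ σ.filter (fun v => u ≠ v ∧ insert v {u} ∈ X.faces) := by
        rw [hfe]; exact hv
      exact (Finset.mem_filter.mp hv').2
    constructor
    · intro huσ
      exact (hall u huσ).1 rfl
    · intro v hv
      refine ⟨by simpa using (hall v hv).1, ?_⟩
      have : insert u {v} = insert v {u} := Finset.pair_comm u v
      rw [this]
      exact (hall v hv).2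
  set B : Finset (Fin n) := Finset.univ.filter (fun u => u ∉ σ ∧ insert u σ ∈ X.faces) with hBdef
  set C : Finset (Fin n) := Finset.univ.filter
      (fun u => ¬ X.vLk u σ ∧ ∀ v ∈ σ, X.vLk u {v}) with hCdef
  have hAsub : A ⊆ B ∪ C := by
    intro u hu
    obtain ⟨huσ, hall⟩ := hAmem u hu
    by_cases h : insert u σ ∈ X.faces
    · exact Finset.mem_union_left _ (by simp [hBdef, huσ, h])
    · refine Finset.mem_union_right _ ?_
      simp only [hCdef, Finset.mem_filter, Finset.mem_univ, true_and]
      exact ⟨fun hv => h hv.2, hall⟩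
  have hB : B.card ≤ X.fdeg σ := by
    apply Finset.card_le_card_of_injOn (fun u => insert u σ)
    · intro u hu
      rw [hBdef, Finset.mem_coe, Finset.mem_filter] at hu
      simp only [SC.fdeg, Finset.mem_coe, Finset.mem_filter]
      exact ⟨hu.2.2, by rw [Finset.card_insert_of_notMem hu.2.1], Finset.subset_insert _ _⟩
    · intro u hu u' hu' h
      simp only [hBdef, Finset.mem_coe, Finset.mem_filter] at hu hu'
      have h' : insert u σ = insert u' σ := h
      have : u ∈ insert u' σ := h' ▸ Finset.mem_insert_self u σ
      rcases Finset.mem_insert.mp this with h'' | h''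
      · exact h''
      · exact absurd h'' hu.2.1
  have hC : C.card ≤ ∑ j ∈ Finset.range (k + 2), (X.dset σ j).card := by
    calc C.card ≤ ((Finset.range (k + 2)).biUnion (X.dset σ)).card := by
          apply Finset.card_le_card
          intro u hu
          rw [hCdef, Finset.mem_filter] at hu
          rw [Finset.mem_biUnion]
          refine ⟨(σ.filter (fun w => X.vLk u (σ.erase w))).card, ?_, ?_⟩
          · rw [Finset.mem_range]
            have : (σ.filter (fun w => X.vLk u (σ.erase w))).card ≤ σ.card :=
              Finset.card_le_card (Finset.filter_subset _ _)
            omega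
          · simp only [SC.dset, Finset.mem_filter, Finset.mem_univ, true_and]
            exact ⟨hu.2.1, hu.2.2, trivial⟩
      _ ≤ ∑ j ∈ Finset.range (k + 2), (X.dset σ j).card := Finset.card_biUnion_le
  have hA : A.card ≤ X.fdeg σ + ∑ j ∈ Finset.range (k + 2), (X.dset σ j).card := by
    calc A.card ≤ (B ∪ C).card := Finset.card_le_card hAsub
    _ ≤ B.card + C.card := Finset.card_union_le _ _
    _ ≤ _ := add_le_add hB hC
  rw [hswap]
  omega
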